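/- Suppose real numbers P^{US}, P^{AS}, P^{UI}, P^{AI}, q, u, v, γ with u,v,γ ∈ (0,1), q ∈ [0,1), satisfy the equilibrium system: P^{US} = P^{US}(1-v) + P^{AI}γu + P^{AS}qu; P^{AS} = P^{US}v + P^{AI}γ(1-u) + P^{AS}q(1-u); P^{UI} = P^{UI}(1-v) + P^{AI}(1-γ)u + P^{AS}(1-q)u; P^{AI} = P^{UI}v + P^{AI}(1-γ)(1-u) + P^{AS}(1-q)(1-u); and P^{US}+P^{AS}+P^{UI}+P^{AI} = 1. Then P^{AI} = (v/(u+v))·(1-q)/(1-q+γ), P^{UI} = (u/v)·P^{AI}, P^{AS} = (v/(u+v))·γ/(1-q+γ), and P^{US} = (u/v)·P^{AS}. -/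
import Mathlib


/-- Epidemic-persistence equilibrium of the SIS model with sleep scheduling. -/
theorem persistence_equilibrium
    (u v γ q PUS PAS PUI PAI : ℝ)
    (hu : u ∈ Set.Ioo (0:ℝ) 1) (hv : v ∈ Set.Ioo (0:ℝ) 1)
    (hγ : γ ∈ Set.Ioo (0:ℝ) 1) (hq : q ∈ Set.Ico (0:ℝ) 1)
    (heq1 : PUS = PUS * (1 - v) + PAI * γ * u + PAS * q * u)
    (heq2 : PAS = PUS * v + PAI * γ * (1 - u) + PAS * q * (1 - u))
    (heq3 : PUI = PUI * (1 - v) + PAI * (1 - γ) * u + PAS * (1 - q) * u)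
    (heq4 : PAI = PUI * v + PAI * (1 - γ) * (1 - u) + PAS * (1 - q) * (1 - u))
    (hsum : PUS + PAS + PUI + PAI = 1) :
    PAI = (v / (u + v)) * ((1 - q) / (1 - q + γ)) ∧
    PUI = (u / v) * PAI ∧
    PAS = (v / (u + v)) * (γ / (1 - q + γ)) ∧
    PUS = (u / v) * PAS := by
  obtain ⟨hu0, hu1⟩ := hu
  obtain ⟨hv0, hv1⟩ := hv
  obtain ⟨hγ0, hγ1⟩ := hγ
  obtain ⟨hq0, hq1⟩ := hq
  have hvne : v ≠ 0 := ne_of_gt hv0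
  have huv : u + v ≠ 0 := ne_of_gt (by linarith)
  have hqγ : 1 - q + γ ≠ 0 := ne_of_gt (by linarith)
  have key : PAS * (1 - q) = PAI * γ := by linear_combination heq1 + heq2
  have hUS : PUS * v = u * PAS := by linear_combination heq1 - u * key
  have hUI : PUI * v = u * PAI := by linear_combination heq3 + u * key
  have hsum2 : (PAS + PAI) * (u + v) = v := by
    linear_combination v * hsum - hUS - hUI
  have hAI : PAI * ((1 - q + γ) * (u + v)) = v * (1 - q) := by
    linear_combination -(u + v) * key + (1 - q) * hsum2
  have hAS : PAS * ((1 - q + γ) * (u + v)) = v * γ := by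
    linear_combination (u + v) * key + γ * hsum2
  refine ⟨?_, ?_, ?_, ?_⟩
  · field_simp
    linear_combination hAI
  · field_simp
    linear_combination hUI
  · field_simp
    linear_combination hAS
  · field_simp
    linear_combination hUS
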